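/- Let $n \ge 2$, $\theta \in (0, \pi/2)$, and let $\lambda_1 \ge \dots \ge \lambda_{n-1} > 0 > \lambda_n$ satisfy $\sum_{i=1}^n \arctan \lambda_i \ge (n-2)\frac{\pi}{2} + \theta$ and $\lambda_n > -\cot\theta$. Set $\hat\lambda_n = \tan(\arctan \lambda_n - \theta)$. Then $\sum_{i=1}^{n-1} \frac{1}{\lambda_i} + \frac{1}{\hat\lambda_n} \le 0$. -/

import Mathlib

open Real

lemma arctan_add_le_aux {a b : ℝ} (ha : 0 ≤ a) (hb : 0 ≤ b) :
    Real.arctan (a + b) ≤ Real.arctan a + Real.arctan b := by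
  by_cases h : a * b < 1
  · rw [Real.arctan_add h]
    apply Real.arctan_strictMono.monotone
    rw [le_div_iff₀ (by nlinarith)]
    nlinarith [mul_nonneg (mul_nonneg ha hb) (add_nonneg ha hb)]
  · push_neg at h
    have hb0 : 0 < b := by nlinarith
    have ha0 : 0 < a := by nlinarith
    have h1 : b⁻¹ ≤ a := by rw [inv_le_iff_one_le_mul₀ hb0]; linarith [mul_comm a b]
    have := Real.arctan_strictMono.monotone h1
    rw [Real.arctan_inv_of_pos hb0] at this
    linarith [Real.arctan_lt_pi_div_two (a + b)]

lemma arctan_sum_le {ι : Type*} (s : Finset ι) (f : ι → ℝ) (hf : ∀ i ∈ s, 0 ≤ f i) :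
    Real.arctan (∑ i ∈ s, f i) ≤ ∑ i ∈ s, Real.arctan (f i) := by
  classical
  induction s using Finset.induction with
  | empty => simp
  | insert a t hx ih =>
    rw [Finset.sum_insert hx, Finset.sum_insert hx]
    have h1 : 0 ≤ f a := hf a (Finset.mem_insert_self _ _)
    have h2 : ∀ i ∈ t, 0 ≤ f i := fun i hi => hf i (Finset.mem_insert_of_mem hi)
    calc Real.arctan (f a + ∑ i ∈ t, f i)
        ≤ Real.arctan (f a) + Real.arctan (∑ i ∈ t, f i) :=
          arctan_add_le_aux h1 (Finset.sum_nonneg h2)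
      _ ≤ _ := by linarith [ih h2]

theorem stmt_14 (n : ℕ) (hn : 2 ≤ n) (θ : ℝ) (hθ : θ ∈ Set.Ioo 0 (Real.pi / 2))
    (lam : Fin n → ℝ)
    (hmono : ∀ i j : Fin n, i ≤ j → lam j ≤ lam i)
    (hpos : 0 < lam ⟨n - 2, by omega⟩)
    (hneg : lam ⟨n - 1, by omega⟩ < 0)
    (hphase : (n - 2 : ℝ) * (Real.pi / 2) + θ ≤ ∑ i, Real.arctan (lam i))
    (hlow : -(Real.tan θ)⁻¹ < lam ⟨n - 1, by omega⟩) :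
    (∑ i ∈ Finset.univ.erase ⟨n - 1, by omega⟩, (lam i)⁻¹) +
      (Real.tan (Real.arctan (lam ⟨n - 1, by omega⟩) - θ))⁻¹ ≤ 0 := by
  have hθ0 := hθ.1
  have hθ2 := hθ.2
  set m : Fin n := ⟨n - 1, by omega⟩ with hm
  -- positivity of lam i for i ≠ m
  have hposall : ∀ i ∈ Finset.univ.erase m, 0 < lam i := by
    intro i hi
    have hine : i ≠ m := (Finset.mem_erase.mp hi).1
    have hle : i ≤ (⟨n - 2, by omega⟩ : Fin n) := by
      have : i.val ≠ n - 1 := fun h => hine (Fin.ext h)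
      have : i.val ≤ n - 2 := by omega
      exact this
    exact lt_of_lt_of_le hpos (hmono i _ hle)
  set α : ℝ := Real.arctan (lam m) - θ with hα
  -- bounds on α
  have htanθpos : 0 < Real.tan θ := Real.tan_pos_of_pos_of_lt_pi_div_two hθ0 hθ2
  have harctanlow : θ - Real.pi / 2 < Real.arctan (lam m) := by
    have h1 : Real.arctan (-(Real.tan θ)⁻¹) < Real.arctan (lam m) :=
      Real.arctan_strictMono hlow
    rwa [Real.arctan_neg, Real.arctan_inv_of_pos htanθpos,
      Real.arctan_tan (by linarith) (by linarith), neg_sub] at h1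
  have hαlow : -(Real.pi / 2) < α := by simp only [hα]; linarith
  have hαneg : α < 0 := by
    have : Real.arctan (lam m) < 0 := by
      rw [← Real.arctan_zero]; exact Real.arctan_strictMono hneg
    simp only [hα]; linarith
  have htanαneg : Real.tan α < 0 := Real.tan_neg_of_neg_of_pi_div_two_lt hαneg hαlow
  have htannegαpos : 0 < Real.tan (-α) := by rw [Real.tan_neg]; linarith
  -- key: S := sum of inverses
  set S : ℝ := ∑ i ∈ Finset.univ.erase m, (lam i)⁻¹ with hS
  -- chain of arctan inequalities
  have hstep1 : Real.arctan S ≤ ∑ i ∈ Finset.univ.erase m, Real.arctan (lam i)⁻¹ :=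
    arctan_sum_le _ _ (fun i hi => (inv_pos.mpr (hposall i hi)).le)
  have hstep2 : ∑ i ∈ Finset.univ.erase m, Real.arctan (lam i)⁻¹
      = ∑ i ∈ Finset.univ.erase m, (Real.pi / 2 - Real.arctan (lam i)) := by
    exact Finset.sum_congr rfl fun i hi => Real.arctan_inv_of_pos (hposall i hi)
  have hcard : (Finset.univ.erase m).card = n - 1 := by
    rw [Finset.card_erase_of_mem (Finset.mem_univ _), Finset.card_univ, Fintype.card_fin]
  have hsum_erase : ∑ i ∈ Finset.univ.erase m, Real.arctan (lam i)
      = (∑ i, Real.arctan (lam i)) - Real.arctan (lam m) := by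
    rw [← Finset.sum_erase_add Finset.univ _ (Finset.mem_univ m)]; ring
  have hstep3 : ∑ i ∈ Finset.univ.erase m, (Real.pi / 2 - Real.arctan (lam i))
      ≤ Real.pi / 2 + α := by
    rw [Finset.sum_sub_distrib, Finset.sum_const, hcard, hsum_erase, nsmul_eq_mul]
    have hcast : ((n - 1 : ℕ) : ℝ) = (n : ℝ) - 1 := by
      rw [Nat.cast_sub (by omega)]; norm_num
    rw [hcast]
    have := hphase
    simp only [hα]
    nlinarith [Real.pi_pos]
  have hkey : Real.arctan S ≤ Real.pi / 2 + α := by linarith [hstep2 ▸ hstep1]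
  have heq : Real.pi / 2 + α = Real.arctan (Real.tan (-α))⁻¹ := by
    rw [Real.arctan_inv_of_pos htannegαpos, Real.arctan_tan (by linarith) (by linarith)]
    ring
  have hSle : S ≤ (Real.tan (-α))⁻¹ := by
    rw [heq] at hkey
    exact Real.arctan_strictMono.le_iff_le.mp hkey
  have hfin : (Real.tan α)⁻¹ = -(Real.tan (-α))⁻¹ := by rw [Real.tan_neg, inv_neg, neg_neg]
  show S + (Real.tan α)⁻¹ ≤ 0
  rw [hfin]; linarith
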